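/- For all n ≥ 0, C_{n+1}(1|q) = q^{n(n+1)/2} · Σ_{k=0}^{n} f(n, k | q^{-1}); equivalently, C_{n+1}(1|q) equals the reversed Carlitz–Riordan q-Catalan number q^{n(n+1)/2}·C_{n+1}(q^{-1}), where C_{n+1}(q) = Σ_{k=0}^{n} f(n,k|q). -/

import Mathlib

open Polynomial Finset

/-- The indeterminate `q`, as an element of the field of rational functions `ℚ(q)`. -/
noncomputable def qq : RatFunc ℚ := RatFunc.X

/-- The Carlitz–Riordan `q`-ballot numbers `f(n,k|q) ∈ ℤ[q]`:
`f(0,0|q) = 1`, `f(n,k|q) = 0` for `k > n`, and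
`f(n,k|q) = q·f(n,k-1|q) + q^k·f(n-1,k|q)` for `n ≥ k ≥ 0`, `(n,k) ≠ (0,0)`
(with `f(n,-1|q) = 0`, so `f(n,0|q) = f(n-1,0|q)`). -/
noncomputable def fq : ℕ → ℕ → Polynomial ℤ
  | 0, 0 => 1
  | 0, _ + 1 => 0
  | n + 1, 0 => fq n 0
  | n + 1, k + 1 =>
    if k + 1 ≤ n + 1 then
      Polynomial.X * fq (n + 1) k + Polynomial.X ^ (k + 1) * fq n (k + 1)
    else 0
  termination_by n k => (n, k)


lemma fq_zero : ∀ n, fq n 0 = 1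
  | 0 => by rw [fq]
  | n+1 => by rw [fq]; exact fq_zero n

lemma fq_of_lt : ∀ n k, n < k → fq n k = 0
  | 0, k+1, _ => by rw [fq]
  | n+1, k+1, h => by rw [fq]; simp [show ¬ (k+1 ≤ n+1) by omega]

lemma fq_succ (m k : ℕ) (h : k + 1 ≤ m + 1) :
    fq (m+1) (k+1) = X * fq (m+1) k + X^(k+1) * fq m (k+1) := by
  rw [fq, if_pos h]

lemma fq_key (m : ℕ) : ∀ n, n ≤ m + 1 → fq (m+1) n = X ^ n * ∑ k ∈ range (n+1), fq m k
  | 0, _ => by simp [fq_zero]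
  | n+1, h => by
    rw [fq_succ m n h, fq_key m n (by omega), sum_range_succ _ (n+1)]
    ring

noncomputable def Sq (m n : ℕ) : RatFunc ℚ := ∑ k ∈ Finset.range (n+1), Polynomial.aeval qq⁻¹ (fq m k)

lemma Sq_zero (m : ℕ) : Sq m 0 = 1 := by simp [Sq, fq_zero]

lemma Sq_succ (m n : ℕ) : Sq m (n+1) = Sq m n + Polynomial.aeval qq⁻¹ (fq m (n+1)) := by
  simp [Sq, sum_range_succ]

lemma Sq_diag (n : ℕ) : Sq n (n+1) = Sq n n := by
  rw [Sq_succ, fq_of_lt n (n+1) (by omega)]; simp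

lemma aeval_fq_key (m n : ℕ) (h : n ≤ m + 1) :
    Polynomial.aeval qq⁻¹ (fq (m+1) n) = (qq⁻¹) ^ n * Sq m n := by
  rw [fq_key m n h]; simp [Sq]

noncomputable def tq (j : ℕ) : RatFunc ℚ := ∑ i ∈ Finset.range (j+1), qq ^ i

lemma tq_zero : tq 0 = 1 := by simp [tq]
lemma tq_succ (j : ℕ) : tq (j+1) = qq * tq j + 1 := geom_sum_succ
lemma tq_geom (j : ℕ) : 1 + (qq - 1) * tq j = qq ^ (j+1) := by
  have := geom_sum_mul qq (j+1)
  unfold tq; linear_combination this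

def Tn : ℕ → ℕ
  | 0 => 0
  | n+1 => Tn n + n + 1

lemma Tn_eq (n : ℕ) : Tn n = n * (n+1) / 2 := by
  induction n with
  | zero => rfl
  | succ n ih =>
    have h : (n+1) * (n+1+1) = n*(n+1) + 2*(n+1) := by ring
    show Tn n + n + 1 = _
    omega

lemma qq_ne : (qq : RatFunc ℚ) ≠ 0 := RatFunc.X_ne_zero

lemma hcanc (a b : ℕ) : qq ^ (a+b) * (qq⁻¹) ^ a = qq ^ b := by
  rw [pow_add, inv_pow, mul_comm (qq^a), mul_assoc, mul_inv_cancel₀ (pow_ne_zero _ qq_ne), mul_one]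

/-- For all `n ≥ 0`:
`C_{n+1}(1|q) = q^{n(n+1)/2} · Σ_{k=0}^{n} f(n,k|q⁻¹)`, the reversed `q`-Catalan number. -/
theorem statement4 (Cs : ℕ → Polynomial (RatFunc ℚ))
    (h1 : Cs 1 = 1)
    (h2 : ∀ n, 2 ≤ n → (Cs n).eval (-qq⁻¹) = 0)
    (h3 : ∀ n, 1 ≤ n →
      Cs (n + 1) -
          (Cs (n + 1)).comp (Polynomial.C qq⁻¹ * Polynomial.X - Polynomial.C qq⁻¹) =
        (1 + Polynomial.C (qq - 1) * Polynomial.X) *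
          (Cs n).comp (Polynomial.C qq * Polynomial.X + 1))
    (n : ℕ) :
    (Cs (n + 1)).eval 1 =
      qq ^ (n * (n + 1) / 2) *
        ∑ k ∈ Finset.range (n + 1), Polynomial.aeval qq⁻¹ (fq n k) := by
  have hq : (qq : RatFunc ℚ) ≠ 0 := qq_ne
  have hev : ∀ m, 1 ≤ m → ∀ x : RatFunc ℚ,
      (Cs (m+1)).eval x - (Cs (m+1)).eval (qq⁻¹ * x - qq⁻¹) =
        (1 + (qq - 1) * x) * (Cs m).eval (qq * x + 1) := by
    intro m hm x
    have h := congrArg (Polynomial.eval x) (h3 m hm)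
    simpa [eval_comp] using h
  have hstep : ∀ m, 1 ≤ m → ∀ j,
      (Cs (m+1)).eval (tq (j+1)) =
        (Cs (m+1)).eval (tq j) + qq ^ (j+2) * (Cs m).eval (tq (j+2)) := by
    intro m hm j
    have h := hev m hm (tq (j+1))
    have e1 : qq⁻¹ * tq (j+1) - qq⁻¹ = tq j := by
      rw [tq_succ]; field_simp; ring
    have e2 : qq * tq (j+1) + 1 = tq (j+2) := (tq_succ (j+1)).symm
    have e3 : 1 + (qq - 1) * tq (j+1) = qq ^ (j+2) := tq_geom (j+1)
    rw [e1, e2, e3] at h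
    linear_combination h
  have hstep0 : ∀ m, 1 ≤ m →
      (Cs (m+1)).eval 1 = (Cs m).eval 1 + qq * (Cs m).eval (tq 1) := by
    intro m hm
    have ha := hev m hm 1
    have hb := hev m hm 0
    have hz : (Cs (m+1)).eval (-qq⁻¹) = 0 := h2 (m+1) (by omega)
    have e1 : qq⁻¹ * (1:RatFunc ℚ) - qq⁻¹ = 0 := by ring
    have e2 : qq⁻¹ * (0:RatFunc ℚ) - qq⁻¹ = -qq⁻¹ := by ring
    have e3 : qq * (1:RatFunc ℚ) + 1 = tq 1 := by
      rw [tq_succ, tq_zero]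
    have e4 : qq * (0:RatFunc ℚ) + 1 = 1 := by ring
    rw [e1, e3] at ha
    rw [e2, e4, hz] at hb
    linear_combination ha + hb
  have main : ∀ m j, qq ^ Tn j * (Cs (m+1)).eval (tq j)
      = qq ^ Tn (m+j) * Sq (m+j) m := by
    intro m
    induction m with
    | zero =>
      intro j
      simp [h1, Sq_zero]
    | succ m ih =>
      intro j
      induction j with
      | zero =>
        have A0 := ih 0
        have A1 := ih 1
        simp only [Nat.add_zero, Tn, pow_zero, one_mul, tq_zero] at A0 A1 ⊢
        have hs := hstep0 (m+1) (by omega)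
        have hR : Sq (m+1) (m+1) = Sq (m+1) m + (qq⁻¹)^(m+1) * Sq m m := by
          rw [Sq_succ, aeval_fq_key m (m+1) (le_refl _), Sq_diag]
        rw [hR, hs]
        have hc := hcanc (m+1) (Tn m)
        rw [show Tn m + m + 1 = (m+1) + Tn m by omega]
        linear_combination A0 + A1 - Sq m m * hc
      | succ j ihj =>
        have ih2 := ih (j+2)
        have hs := hstep (m+1) (by omega) j
        have hR : Sq (m+1+(j+1)) (m+1) = Sq (m+j+2) m + (qq⁻¹)^(m+1) * Sq (m+j+1) (m+1) := by
          rw [show m+1+(j+1) = (m+j+1)+1 by omega, Sq_succ,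
            aeval_fq_key (m+j+1) (m+1) (by omega)]
        rw [hR, hs]
        rw [show m+1+j = m+j+1 by omega] at ihj
        rw [show m+(j+2) = m+j+2 by omega] at ih2
        have e1 : Tn (j+1) = Tn j + (j+1) := by simp [Tn]; omega
        have e2 : Tn (j+2) = Tn j + (2*j+3) := by simp [Tn]; omega
        have e3 : Tn (m+1+(j+1)) = Tn (m+j+1) + (m+j+2) := by
          rw [show m+1+(j+1) = (m+j+1)+1 by omega]; simp [Tn]; omega
        have e4 : Tn (m+j+2) = Tn (m+j+1) + (m+j+2) := by
          rw [show m+j+2 = (m+j+1)+1 by omega]; simp [Tn]; omega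
        rw [e1, e3] at *
        rw [e2, e4] at ih2
        have hc := hcanc (m+1) (Tn (m+j+1) + (j+1))
        rw [show Tn (m+j+1) + (m+j+2) = (m+1) + (Tn (m+j+1) + (j+1)) by omega]
        linear_combination qq^(j+1) * ihj + ih2 - Sq (m+j+1) (m+1) * hc
  have h := main n 0
  simp only [Nat.add_zero, Tn, pow_zero, one_mul, tq_zero] at h
  rw [h, Tn_eq]
  rfl
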